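/- Let A be a finite-dimensional real vector space, ω a 2-form on A with kernel K, and B, C ⊆ A subspaces. Define R_ω(C) := {(c, ι_c ω) | c ∈ C} ⊆ A ⊕ A* and view B as B ⊕ 0. Then the following are equivalent: (a) ω(B,C) = 0 and dim(B ∩ K ∩ C) = dim B + dim C − dim A; (b) B + R_ω(C) is a Lagrangian subspace of A ⊕ A* with respect to the canonical pairing. -/

import Mathlib

open Module LinearMap

noncomputable def pairingP (A : Type*) [AddCommGroup A] [Module ℝ A] :
    (A × Module.Dual ℝ A) →ₗ[ℝ] (A × Module.Dual ℝ A) →ₗ[ℝ] ℝ :=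
  LinearMap.mk₂ ℝ (fun x y => x.2 y.1 + y.2 x.1)
    (fun x x' y => by simp; ring)
    (fun c x y => by simp; ring)
    (fun x y y' => by simp; ring)
    (fun c x y => by simp; ring)

noncomputable def orth {A : Type*} [AddCommGroup A] [Module ℝ A]
    (E : Submodule ℝ (A × Module.Dual ℝ A)) : Submodule ℝ (A × Module.Dual ℝ A) :=
  ⨅ e ∈ E, LinearMap.ker (pairingP A e)

def IsLagrangian {A : Type*} [AddCommGroup A] [Module ℝ A]
    (E : Submodule ℝ (A × Module.Dual ℝ A)) : Prop := E = orth E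

noncomputable def omegaOrth {A : Type*} [AddCommGroup A] [Module ℝ A]
    (ω : A →ₗ[ℝ] A →ₗ[ℝ] ℝ) (B : Submodule ℝ A) : Submodule ℝ A :=
  ⨅ b ∈ B, LinearMap.ker (ω.flip b)

noncomputable def grForm {A : Type*} [AddCommGroup A] [Module ℝ A]
    (ω : A →ₗ[ℝ] A →ₗ[ℝ] ℝ) : A →ₗ[ℝ] A × Module.Dual ℝ A :=
  LinearMap.prod LinearMap.id ω

noncomputable def inlA (A : Type*) [AddCommGroup A] [Module ℝ A] :
    A →ₗ[ℝ] A × Module.Dual ℝ A := LinearMap.inl ℝ A (Module.Dual ℝ A)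

noncomputable def gaugeMap {A : Type*} [AddCommGroup A] [Module ℝ A]
    (ω : A →ₗ[ℝ] A →ₗ[ℝ] ℝ) : (A × Module.Dual ℝ A) →ₗ[ℝ] (A × Module.Dual ℝ A) :=
  LinearMap.prod (LinearMap.fst ℝ A _) (LinearMap.snd ℝ A _ + ω ∘ₗ LinearMap.fst ℝ A _)

noncomputable def tauMap {A₀ A₁ : Type*} [AddCommGroup A₀] [Module ℝ A₀]
    [AddCommGroup A₁] [Module ℝ A₁] (φ : A₀ →ₗ[ℝ] A₁) :
    (A₀ × Module.Dual ℝ A₁) →ₗ[ℝ] (A₀ × Module.Dual ℝ A₀) :=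
  LinearMap.prod (LinearMap.fst ℝ A₀ _) (φ.dualMap ∘ₗ LinearMap.snd ℝ A₀ _)

noncomputable def sigMap {A₀ A₁ : Type*} [AddCommGroup A₀] [Module ℝ A₀]
    [AddCommGroup A₁] [Module ℝ A₁] (φ : A₀ →ₗ[ℝ] A₁) :
    (A₀ × Module.Dual ℝ A₁) →ₗ[ℝ] (A₁ × Module.Dual ℝ A₁) :=
  LinearMap.prod (φ ∘ₗ LinearMap.fst ℝ A₀ _) (LinearMap.snd ℝ A₀ _)

noncomputable def pullLag {A₀ A₁ : Type*} [AddCommGroup A₀] [Module ℝ A₀]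
    [AddCommGroup A₁] [Module ℝ A₁] (φ : A₀ →ₗ[ℝ] A₁)
    (L₁ : Submodule ℝ (A₁ × Module.Dual ℝ A₁)) : Submodule ℝ (A₀ × Module.Dual ℝ A₀) :=
  Submodule.map (tauMap φ) (Submodule.comap (sigMap φ) L₁)

noncomputable def pushLag {A₀ A₁ : Type*} [AddCommGroup A₀] [Module ℝ A₀]
    [AddCommGroup A₁] [Module ℝ A₁] (φ : A₀ →ₗ[ℝ] A₁)
    (L₀ : Submodule ℝ (A₀ × Module.Dual ℝ A₀)) : Submodule ℝ (A₁ × Module.Dual ℝ A₁) :=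
  Submodule.map (sigMap φ) (Submodule.comap (tauMap φ) L₀)


section Aux
open Module LinearMap

variable {A : Type*} [AddCommGroup A] [Module ℝ A]

lemma pairingP_apply (x y : A × Module.Dual ℝ A) :
    pairingP A x y = x.2 y.1 + y.2 x.1 := rfl

lemma pairingP_isRefl : (pairingP A).IsRefl := by
  intro x y h
  simpa [pairingP_apply, add_comm] using h

lemma orth_eq (E : Submodule ℝ (A × Module.Dual ℝ A)) :
    orth E = LinearMap.BilinForm.orthogonal (pairingP A) E := by
  ext x
  simp [orth, LinearMap.BilinForm.mem_orthogonal_iff, LinearMap.BilinForm.IsOrtho]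

lemma pairingP_nondegenerate [FiniteDimensional ℝ A] :
    LinearMap.BilinForm.Nondegenerate (pairingP A) := by
  refine (fun hL => ⟨hL, fun y hy => hL y fun x => pairingP_isRefl _ _ (hy x)⟩) ?_
  intro x hx
  have h1 : x.2 = 0 := by
    ext v
    simpa [pairingP_apply] using hx (v, 0)
  have h2 : x.1 = 0 := by
    rw [← Module.forall_dual_apply_eq_zero_iff ℝ x.1]
    intro φ
    simpa [pairingP_apply, h1] using hx (0, φ)
  exact Prod.ext h2 h1

end Aux

section Aux2
open Module LinearMap

variable {A : Type*} [AddCommGroup A] [Module ℝ A]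

lemma skew (ω : A →ₗ[ℝ] A →ₗ[ℝ] ℝ) (hω : ∀ a, ω a a = 0) (a b : A) :
    ω a b = - ω b a := by
  have h := hω (a + b)
  simp only [map_add, LinearMap.add_apply, hω a, hω b] at h
  linarith

lemma mem_E (ω : A →ₗ[ℝ] A →ₗ[ℝ] ℝ) (B C : Submodule ℝ A) (x : A × Module.Dual ℝ A) :
    x ∈ Submodule.map (inlA A) B ⊔ Submodule.map (grForm ω) C ↔
      ∃ b ∈ B, ∃ c ∈ C, x = (b + c, ω c) := by
  rw [Submodule.mem_sup]
  constructor
  · rintro ⟨y, hy, z, hz, rfl⟩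
    obtain ⟨b, hb, rfl⟩ := hy
    obtain ⟨c, hc, rfl⟩ := hz
    exact ⟨b, hb, c, hc, by simp [inlA, grForm, Prod.ext_iff]⟩
  · rintro ⟨b, hb, c, hc, rfl⟩
    exact ⟨(b, 0), ⟨b, hb, rfl⟩, (c, ω c), ⟨c, hc, rfl⟩, by simp [Prod.ext_iff]⟩

lemma mem_orth_E (ω : A →ₗ[ℝ] A →ₗ[ℝ] ℝ) (B C : Submodule ℝ A) (x : A × Module.Dual ℝ A) :
    x ∈ orth (Submodule.map (inlA A) B ⊔ Submodule.map (grForm ω) C) ↔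
      (∀ b ∈ B, x.2 b = 0) ∧ ∀ c ∈ C, ω c x.1 + x.2 c = 0 := by
  constructor
  · intro hx
    have hmem : ∀ e ∈ Submodule.map (inlA A) B ⊔ Submodule.map (grForm ω) C,
        pairingP A e x = 0 := by
      simpa [orth] using hx
    refine ⟨fun b hb => ?_, fun c hc => ?_⟩
    · have := hmem (b, 0) ((mem_E ω B C _).2 ⟨b, hb, 0, zero_mem _, by simp⟩)
      simpa [pairingP_apply] using this
    · have := hmem (c, ω c) ((mem_E ω B C _).2 ⟨0, zero_mem _, c, hc, by simp⟩)
      simpa [pairingP_apply] using this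
  · rintro ⟨h1, h2⟩
    simp only [orth, Submodule.mem_iInf, LinearMap.mem_ker]
    intro e he
    obtain ⟨b, hb, c, hc, rfl⟩ := (mem_E ω B C e).1 he
    have := h2 c hc
    have := h1 b hb
    simp only [pairingP_apply, map_add]
    linarith

lemma inf_E (ω : A →ₗ[ℝ] A →ₗ[ℝ] ℝ) (B C : Submodule ℝ A) :
    Submodule.map (inlA A) B ⊓ Submodule.map (grForm ω) C
      = Submodule.map (inlA A) (B ⊓ LinearMap.ker ω ⊓ C) := by
  ext x
  constructor
  · rintro ⟨⟨b, hb, rfl⟩, ⟨c, hc, hcx⟩⟩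
    have h1 : c = b := congrArg Prod.fst hcx
    have h2 : ω c = 0 := congrArg Prod.snd hcx
    subst h1
    exact ⟨c, ⟨⟨hb, h2⟩, hc⟩, rfl⟩
  · rintro ⟨b, ⟨⟨hb, hk⟩, hc⟩, rfl⟩
    exact ⟨⟨b, hb, rfl⟩, ⟨b, hc, by simp [grForm, inlA, Prod.ext_iff, LinearMap.mem_ker.1 hk]⟩⟩

lemma inlA_injective : Function.Injective (inlA A) := fun x y h => by
  simpa [inlA, Prod.ext_iff] using h

lemma grForm_injective (ω : A →ₗ[ℝ] A →ₗ[ℝ] ℝ) : Function.Injective (grForm ω) :=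
  fun x y h => congrArg Prod.fst h

variable [FiniteDimensional ℝ A]

lemma finrank_E (ω : A →ₗ[ℝ] A →ₗ[ℝ] ℝ) (B C : Submodule ℝ A) :
    Module.finrank ℝ ↥(Submodule.map (inlA A) B ⊔ Submodule.map (grForm ω) C)
      + Module.finrank ℝ ↥(B ⊓ LinearMap.ker ω ⊓ C)
      = Module.finrank ℝ B + Module.finrank ℝ C := by
  have h1 := Submodule.finrank_sup_add_finrank_inf_eq
    (Submodule.map (inlA A) B) (Submodule.map (grForm ω) C)
  rw [inf_E] at h1
  have e1 : Module.finrank ℝ ↥(Submodule.map (inlA A) B) = Module.finrank ℝ ↥B :=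
    ((Submodule.equivMapOfInjective (inlA A) inlA_injective B).finrank_eq).symm
  have e2 : Module.finrank ℝ ↥(Submodule.map (grForm ω) C) = Module.finrank ℝ ↥C :=
    ((Submodule.equivMapOfInjective (grForm ω) (grForm_injective ω) C).finrank_eq).symm
  have e3 : Module.finrank ℝ ↥(Submodule.map (inlA A) (B ⊓ LinearMap.ker ω ⊓ C))
      = Module.finrank ℝ ↥(B ⊓ LinearMap.ker ω ⊓ C) :=
    ((Submodule.equivMapOfInjective (inlA A) inlA_injective
      (B ⊓ LinearMap.ker ω ⊓ C)).finrank_eq).symm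
  rw [e1, e2, e3] at h1
  exact h1

lemma finrank_orth_E (E : Submodule ℝ (A × Module.Dual ℝ A)) :
    Module.finrank ℝ ↥E + Module.finrank ℝ ↥(orth E)
      = 2 * Module.finrank ℝ A := by
  rw [orth_eq]
  have h := LinearMap.BilinForm.finrank_add_finrank_orthogonal
    (B := pairingP A) pairingP_isRefl E
  rw [LinearMap.BilinForm.orthogonal_top_eq_bot pairingP_nondegenerate,
    inf_bot_eq, finrank_bot, add_zero] at h
  rw [h, Module.finrank_prod, Subspace.dual_finrank_eq]
  ring

end Aux2

theorem stmt10 {A : Type*} [AddCommGroup A] [Module ℝ A] [FiniteDimensional ℝ A]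
    (ω : A →ₗ[ℝ] A →ₗ[ℝ] ℝ) (hω : ∀ a, ω a a = 0) (B C : Submodule ℝ A) :
    ((∀ b ∈ B, ∀ c ∈ C, ω b c = 0) ∧
      Module.finrank ℝ ↥(B ⊓ LinearMap.ker ω ⊓ C) + Module.finrank ℝ A
        = Module.finrank ℝ B + Module.finrank ℝ C) ↔
    IsLagrangian (Submodule.map (inlA A) B ⊔ Submodule.map (grForm ω) C) := by
  set E := Submodule.map (inlA A) B ⊔ Submodule.map (grForm ω) C with hE
  have hd1 := finrank_E ω B C
  rw [← hE] at hd1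
  have hd2 := finrank_orth_E E
  constructor
  · rintro ⟨h1, h2⟩
    have hle : E ≤ orth E := by
      intro x hx
      obtain ⟨b, hb, c, hc, rfl⟩ := (mem_E ω B C x).1 hx
      rw [mem_orth_E]
      constructor
      · intro b' hb'
        show ω c b' = 0
        rw [skew ω hω]
        exact neg_eq_zero.2 (h1 b' hb' c hc)
      · intro c' hc'
        show ω c' (b + c) + ω c c' = 0
        have hsk : ω c' c = - ω c c' := skew ω hω c' c
        have hb0 : ω c' b = 0 := by
          rw [skew ω hω]
          exact neg_eq_zero.2 (h1 b hb c' hc')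
        simp only [map_add]
        rw [hb0, hsk]
        ring
    have hEA : Module.finrank ℝ ↥E = Module.finrank ℝ A := by omega
    have hor : Module.finrank ℝ ↥(orth E) ≤ Module.finrank ℝ ↥E := by omega
    exact Submodule.eq_of_le_of_finrank_le hle hor
  · intro hL
    have hL' : E = orth E := hL
    have hOm : ∀ b ∈ B, ∀ c ∈ C, ω b c = 0 := by
      intro b hb c hc
      have hcE : (c, ω c) ∈ orth E := by
        rw [← hL']
        exact (mem_E ω B C _).2 ⟨0, zero_mem _, c, hc, by simp⟩
      have h0 := ((mem_orth_E ω B C _).1 hcE).1 b hb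
      rw [skew ω hω]
      simpa using h0
    refine ⟨hOm, ?_⟩
    have heq : Module.finrank ℝ ↥(orth E) = Module.finrank ℝ ↥E := by rw [← hL']
    omega
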